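/- Let R be a commutative noetherian ring. A filter ℱ of ideals of R is a Gabriel filter (i.e., satisfies ℱ * ℱ ⊆ ℱ for the Gabriel product) if and only if ℱ is closed under products of ideals, i.e., I₁, I₂ ∈ ℱ implies I₁I₂ ∈ ℱ. -/

import Mathlib

/-- Let `R` be a commutative noetherian ring. A filter `ℱ` of ideals of `R` is a Gabriel
filter (i.e., `ℱ * ℱ ⊆ ℱ` for the Gabriel product) if and only if `ℱ` is closed under
products of ideals. -/
theorem gabriel_filter_iff_closed_under_products (R : Type*) [CommRing R]
    [IsNoetherianRing R] (F : Set (Ideal R))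
    (htop : ⊤ ∈ F) (hup : ∀ I J : Ideal R, I ∈ F → I ≤ J → J ∈ F)
    (hinf : ∀ I J : Ideal R, I ∈ F → J ∈ F → I ⊓ J ∈ F) :
    (∀ I : Ideal R,
        (∃ I₁ ∈ F, ∀ a ∈ I₁, Submodule.comap (LinearMap.mulLeft R a) I ∈ F) → I ∈ F)
      ↔ (∀ I₁ ∈ F, ∀ I₂ ∈ F, I₁ * I₂ ∈ F) := by
  constructor
  · intro h I₁ h1 I₂ h2
    apply h
    refine ⟨I₁, h1, fun a ha => ?_⟩
    refine hup I₂ _ h2 fun b hb => ?_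
    simpa using Ideal.mul_mem_mul ha hb
  · intro h I ⟨I₁, h1, hcom⟩
    classical
    obtain ⟨s, hs⟩ := IsNoetherian.noetherian I₁
    set f : R → Ideal R := fun a => Submodule.comap (LinearMap.mulLeft R a) I with hf
    have hJF : ∀ t : Finset R, (∀ a ∈ t, f a ∈ F) → t.inf f ∈ F := by
      intro t
      induction t using Finset.induction_on with
      | empty => intro _; simpa using htop
      | insert _ _ hx ih =>
        intro hmem
        rw [Finset.inf_insert]
        exact hinf _ _ (hmem _ (Finset.mem_insert_self _ _))
          (ih fun a ha => hmem _ (Finset.mem_insert_of_mem ha))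
    have hJ : s.inf f ∈ F :=
      hJF s fun a ha => hcom a (hs ▸ Ideal.subset_span ha)
    have hcolon : I₁ ≤ I.colon ((s.inf f : Ideal R) : Set R) := by
      rw [← hs, Submodule.span_le]
      intro a ha
      rw [SetLike.mem_coe, Submodule.mem_colon]
      intro b hb
      have : b ∈ f a := (Finset.inf_le ha : s.inf f ≤ f a) hb
      simpa [hf, smul_eq_mul] using this
    have hmul : I₁ * s.inf f ≤ I := Ideal.mul_le.mpr fun r hr b hb => by
      simpa [smul_eq_mul] using Submodule.mem_colon.mp (hcolon hr) b hb
    exact hup _ _ (h I₁ h1 _ hJ) hmul
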